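/- For every n ≥ 1, the geodesic between y₁ and y_{4n} in the full set S_{4n} ∪ {z} is the whole set S_{4n} ∪ {z}; i.e., the only full subset of S_{4n} ∪ {z} containing both y₁ and y_{4n} is S_{4n} ∪ {z} itself. In particular, the family {S_{4n} ∪ {z_n}}_{n≥1} has geodesic lengths tending to infinity. -/

import Mathlib

open scoped BigOperators

/-- Symbols: x₁,x₂,x₃,x₄ are 0,1,2,3 and αⱼ = j+3 (so all symbols are distinct naturals). -/
def α (j : ℕ) : ℕ := j + 3

/-- The points y₁, y₂, y₃, … of the paper's construction. -/
def y : ℕ → Fin 4 → ℕ := fun k =>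
  if k = 1 then ![0, 1, 2, 3]
  else if k = 2 then ![0, 1, α 1, α 2]
  else match k % 4 with
    | 1 => ![0, α (k - 1), α k, α (k + 1)]
    | 2 => ![α (k - 3), 1, α (k - 1), α k]
    | 3 => ![α k, α (k + 1), 2, α (k - 1)]
    | _ => ![α (k - 1), α k, α (k - 3), 3]

/-- u = (u₁,u₂,u₃,u₄) solves equation (1) for f on S. -/
def Solves (S : Set (Fin 4 → ℕ)) (f : (Fin 4 → ℕ) → ℂ) (u : Fin 4 → ℕ → ℂ) : Prop :=
  ∀ p ∈ S, f p = ∑ i, u i (p i)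

/-- S is good: every complex function on S decomposes into coordinate functions. -/
def IsGood (S : Set (Fin 4 → ℕ)) : Prop := ∀ f, ∃ u, Solves S f u

/-- i-th projection of S. -/
def proj (S : Set (Fin 4 → ℕ)) (i : Fin 4) : Set ℕ := (fun p => p i) '' S

/-- B is a boundary set of S: for every f and every prescription U on B,
equation (1) admits a solution agreeing with U on B, unique on the projections of S. -/
def IsBoundary (S : Set (Fin 4 → ℕ)) (B : Set ℕ) : Prop :=
  B ⊆ ⋃ i, proj S i ∧
  ∀ f : (Fin 4 → ℕ) → ℂ, ∀ U : ℕ → ℂ,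
    (∃ u, Solves S f u ∧ ∀ i, ∀ a ∈ B ∩ proj S i, u i a = U a) ∧
    ∀ u v, Solves S f u → (∀ i, ∀ a ∈ B ∩ proj S i, u i a = U a) →
      Solves S f v → (∀ i, ∀ a ∈ B ∩ proj S i, v i a = U a) →
      ∀ i, ∀ a ∈ proj S i, u i a = v i a

/-- S is full: a maximal good subset of the product of its projections. -/
def IsFull (S : Set (Fin 4 → ℕ)) : Prop :=
  IsGood S ∧ ∀ T : Set (Fin 4 → ℕ), S ⊆ T → (∀ p ∈ T, ∀ i, p i ∈ proj S i) →
    IsGood T → T = S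

/-- Sₙ = {y₁,…,y_N}. -/
def Sn (N : ℕ) : Set (Fin 4 → ℕ) := y '' Set.Icc 1 N

/-- The infinite set S = {y₁, y₂, …}. -/
def Sinf : Set (Fin 4 → ℕ) := y '' Set.Ici 1

/-- The extra point z = zₙ = (α_{4n−1}, x₂, α_{4n−3}, x₄). -/
def z (n : ℕ) : Fin 4 → ℕ := ![α (4 * n - 1), 1, α (4 * n - 3), 3]

/-- Two points of S are related iff some finite full subset of S contains both. -/
def Related (S : Set (Fin 4 → ℕ)) (p q : Fin 4 → ℕ) : Prop :=
  ∃ K, K ⊆ S ∧ K.Finite ∧ IsFull K ∧ p ∈ K ∧ q ∈ K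

/-- The 4n×4n incidence matrix A_{4n}: rows y₂,…,y_{4n},zₙ; columns α₁,…,α_{4n}. -/
def A (n : ℕ) : Matrix (Fin (4 * n)) (Fin (4 * n)) ℚ :=
  Matrix.of fun i j =>
    if ∃ k, (if (i : ℕ) = 4 * n - 1 then z n else y ((i : ℕ) + 2)) k = (j : ℕ) + 4
    then 1 else 0


noncomputable section
def ev (q : Fin 4 → ℕ) (u : Fin 4 → ℕ → ℂ) : ℂ := ∑ i, u i (q i)

lemma solves_iff {S f u} : Solves S f u ↔ ∀ p ∈ S, f p = ev p u := Iff.rfl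

lemma good_insert {K : Set (Fin 4 → ℕ)} (hK : IsGood K) (p : Fin 4 → ℕ)
    (u : Fin 4 → ℕ → ℂ) (hu0 : ∀ q ∈ K, ev q u = 0) (hup : ev p u ≠ 0) :
    IsGood (insert p K) := by
  intro f
  obtain ⟨u₀, hu₀⟩ := hK f
  set t : ℂ := (f p - ev p u₀) / ev p u with ht
  refine ⟨fun i a => u₀ i a + t * u i a, ?_⟩
  have hev : ∀ q, ev q (fun i a => u₀ i a + t * u i a) = ev q u₀ + t * ev q u := by
    intro q; simp [ev, Finset.sum_add_distrib, Finset.mul_sum]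
  intro r hr
  rcases hr with rfl | hr
  · show f r = ev r (fun i a => u₀ i a + t * u i a)
    rw [hev, ht, div_mul_cancel₀ _ hup]; ring
  · show f r = ev r (fun i a => u₀ i a + t * u i a)
    rw [hev, hu0 r hr, mul_zero, add_zero]; exact hu₀ r hr

lemma exists_coeffs {K : Set (Fin 4 → ℕ)} (hKf : K.Finite) (hgood : IsGood K)
    (p : Fin 4 → ℕ) (hns : ∀ u, (∀ q ∈ K, ev q u = 0) → ev p u = 0) :
    ∃ C : (Fin 4 → ℕ) → ℂ, (∀ q, q ∉ K → C q = 0) ∧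
      ∀ u, ev p u = ∑ q ∈ hKf.toFinset, C q * ev q u := by
  classical
  -- for each q pick a solution of the delta function at q
  have hδ : ∀ q : Fin 4 → ℕ, ∃ w, ∀ r ∈ K, (if r = q then (1:ℂ) else 0) = ev r w := by
    intro q; exact hgood (fun r => if r = q then 1 else 0)
  choose w hw using hδ
  refine ⟨fun q => if q ∈ K then ev p (w q) else 0, by intro q hq; simp [hq], ?_⟩
  intro u
  set v : Fin 4 → ℕ → ℂ := fun i a => ∑ q ∈ hKf.toFinset, ev q u * w q i a with hv
  have hevv : ∀ r, ev r v = ∑ q ∈ hKf.toFinset, ev q u * ev r (w q) := by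
    intro r
    simp only [ev, hv, Finset.mul_sum]
    rw [Finset.sum_comm]
  have hvr : ∀ r ∈ K, ev r v = ev r u := by
    intro r hr
    rw [hevv]
    rw [Finset.sum_eq_single r]
    · rw [← hw r r hr]; simp
    · intro q hq hqr
      rw [← hw q r hr]; simp [Ne.symm hqr]
    · intro h; exact absurd (hKf.mem_toFinset.2 hr) h
  have hdiff : ev p (fun i a => u i a - v i a) = 0 := by
    apply hns
    intro q hq
    have : ev q (fun i a => u i a - v i a) = ev q u - ev q v := by
      simp [ev, Finset.sum_sub_distrib]
    rw [this, hvr q hq, sub_self]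
  have : ev p (fun i a => u i a - v i a) = ev p u - ev p v := by
    simp [ev, Finset.sum_sub_distrib]
  rw [this] at hdiff
  have hpu : ev p u = ev p v := by
    have := sub_eq_zero.mp hdiff; exact this
  rw [hpu, hevv]
  apply Finset.sum_congr rfl
  intro q hq
  have hqK : q ∈ K := hKf.mem_toFinset.1 hq
  simp [hqK]; ring

def WF (n : ℕ) : Finset (Fin 4 → ℕ) := (Finset.Icc 1 (4*n)).image y ∪ {z n}

lemma Sn_union_eq (n : ℕ) : Sn (4*n) ∪ {z n} = ↑(WF n) := by
  simp only [WF, Finset.coe_union, Finset.coe_image, Finset.coe_Icc, Finset.coe_singleton, Sn]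

lemma full_relation {n : ℕ} {K : Set (Fin 4 → ℕ)} (hKW : K ⊆ ↑(WF n))
    (hfull : IsFull K) (p : Fin 4 → ℕ) (hproj : ∀ i, p i ∈ proj K i) (hpK : p ∉ K) :
    ∃ C : (Fin 4 → ℕ) → ℂ, (∀ q, q ∉ K → C q = 0) ∧
      ∀ (i : Fin 4) (a : ℕ),
        (if p i = a then (1:ℂ) else 0) = ∑ q ∈ WF n, C q * (if q i = a then 1 else 0) := by
  classical
  have hKfin : K.Finite := Set.Finite.subset (WF n).finite_toSet hKW
  have hnotgood : ¬ IsGood (insert p K) := by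
    intro hg
    have heq := hfull.2 (insert p K) (Set.subset_insert _ _) ?_ hg
    · exact hpK (heq ▸ Set.mem_insert p K)
    · rintro r hr i
      rcases hr with rfl | hr
      · exact hproj i
      · exact ⟨r, hr, rfl⟩
  have hns : ∀ u, (∀ q ∈ K, ev q u = 0) → ev p u = 0 := by
    intro u hu
    by_contra h
    exact hnotgood (good_insert hfull.1 p u hu h)
  obtain ⟨C, hC0, hC⟩ := exists_coeffs hKfin hfull.1 p hns
  refine ⟨C, hC0, ?_⟩
  intro i a
  have inst := hC (fun i' b => if i' = i ∧ b = a then 1 else 0)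
  have hev : ∀ q : Fin 4 → ℕ, ev q (fun i' b => if i' = i ∧ b = a then 1 else 0)
      = (if q i = a then (1:ℂ) else 0) := by
    intro q
    unfold ev
    rw [Finset.sum_eq_single i]
    · simp
    · intro i' _ hi'; simp [hi']
    · simp
  simp only [hev] at inst
  rw [inst]
  apply Finset.sum_subset
  · intro q hq; exact hKW (hKfin.mem_toFinset.1 hq)
  · intro q hq hq'
    rw [hC0 q (fun h => hq' (hKfin.mem_toFinset.2 h)), zero_mul]

/-! ### evaluation lemmas for y -/

lemma y_one : y 1 = ![0, 1, 2, 3] := by simp [y]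

lemma y_two : y 2 = ![0, 1, α 1, α 2] := by simp [y]

lemma y_e1 (t : ℕ) (ht : 1 ≤ t) : y (4*t+1) = ![0, α (4*t), α (4*t+1), α (4*t+2)] := by
  have h1 : 4*t+1 ≠ 1 := by omega
  have h2 : 4*t+1 ≠ 2 := by omega
  have h4 : (4*t+1) % 4 = 1 := by omega
  simp only [y, if_neg h1, if_neg h2, h4]
  norm_num

lemma y_e2 (t : ℕ) (ht : 1 ≤ t) : y (4*t+2) = ![α (4*t-1), 1, α (4*t+1), α (4*t+2)] := by
  have h1 : 4*t+2 ≠ 1 := by omega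
  have h2 : 4*t+2 ≠ 2 := by omega
  have h4 : (4*t+2) % 4 = 2 := by omega
  simp only [y, if_neg h1, if_neg h2, h4]
  have e1 : 4*t+2-3 = 4*t-1 := by omega
  have e2 : 4*t+2-1 = 4*t+1 := by omega
  rw [e1, e2]

lemma y_e3 (t : ℕ) : y (4*t+3) = ![α (4*t+3), α (4*t+4), 2, α (4*t+2)] := by
  have h1 : 4*t+3 ≠ 1 := by omega
  have h2 : 4*t+3 ≠ 2 := by omega
  have h4 : (4*t+3) % 4 = 3 := by omega
  simp only [y, if_neg h1, if_neg h2, h4]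
  norm_num

lemma y_e4 (t : ℕ) : y (4*t+4) = ![α (4*t+3), α (4*t+4), α (4*t+1), 3] := by
  have h1 : 4*t+4 ≠ 1 := by omega
  have h2 : 4*t+4 ≠ 2 := by omega
  have h4 : (4*t+4) % 4 = 0 := by omega
  simp only [y, if_neg h1, if_neg h2, h4]
  have e1 : 4*t+4-1 = 4*t+3 := by omega
  have e2 : 4*t+4-3 = 4*t+1 := by omega
  rw [e1, e2]

lemma z_e (n : ℕ) : z n = ![α (4*n-1), 1, α (4*n-3), 3] := rfl

/-- decomposition of indices -/
lemma y_shape (k : ℕ) (hk : 1 ≤ k) :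
    k = 1 ∨ k = 2 ∨ (∃ t, 1 ≤ t ∧ k = 4*t+1) ∨ (∃ t, 1 ≤ t ∧ k = 4*t+2) ∨
    (∃ t, k = 4*t+3) ∨ (∃ t, k = 4*t+4) := by
  have h := Nat.mod_lt k (show 0 < 4 by norm_num)
  have hd : k % 4 + 4 * (k / 4) = k := Nat.mod_add_div k 4
  interval_cases h4 : k % 4
  · right; right; right; right; right; exact ⟨k/4 - 1, by omega⟩
  · rcases Nat.lt_or_ge k 3 with hlt | hge
    · left; omega
    · right; right; left; exact ⟨k/4, by omega, by omega⟩
  · rcases Nat.lt_or_ge k 3 with hlt | hge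
    · right; left; omega
    · right; right; right; left; exact ⟨k/4, by omega, by omega⟩
  · right; right; right; right; left; exact ⟨k/4, by omega⟩

/-! ### completeness lemmas: which points can carry symbol α j in coordinate i -/

section vecsimp
attribute [local simp] Matrix.cons_val_zero Matrix.cons_val_one Matrix.head_cons
  Matrix.cons_val_two Matrix.tail_cons Matrix.cons_val_three

lemma yv0 {k j : ℕ} (hk : 1 ≤ k) (hj : 1 ≤ j) (h : y k 0 = α j) :
    (k = j ∧ 3 ≤ k) ∨ (k = j+1 ∧ 4 ≤ k) ∨ (k = j+3 ∧ 6 ≤ k) := by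
  rcases y_shape k hk with rfl | rfl | ⟨t,ht,rfl⟩ | ⟨t,ht,rfl⟩ | ⟨t,rfl⟩ | ⟨t,rfl⟩
  · rw [y_one] at h; simp only [Matrix.cons_val_zero] at h; unfold α at h; omega
  · rw [y_two] at h; simp only [Matrix.cons_val_zero] at h; unfold α at h; omega
  · rw [y_e1 t ht] at h; simp at h; unfold α at h; omega
  · rw [y_e2 t ht] at h; simp at h; unfold α at h; omega
  · rw [y_e3 t] at h; simp at h; unfold α at h; omega
  · rw [y_e4 t] at h; simp at h; unfold α at h; omega

lemma yv1 {k j : ℕ} (hk : 1 ≤ k) (hj : 1 ≤ j) (h : y k 1 = α j) :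
    (k = j+1 ∧ 5 ≤ k) ∨ (k+1 = j ∧ 3 ≤ k) ∨ (k = j ∧ 4 ≤ k) := by
  rcases y_shape k hk with rfl | rfl | ⟨t,ht,rfl⟩ | ⟨t,ht,rfl⟩ | ⟨t,rfl⟩ | ⟨t,rfl⟩
  · rw [y_one] at h; simp at h; unfold α at h; omega
  · rw [y_two] at h; simp at h; unfold α at h; omega
  · rw [y_e1 t ht] at h; simp at h; unfold α at h; omega
  · rw [y_e2 t ht] at h; simp at h; unfold α at h; omega
  · rw [y_e3 t] at h; simp at h; unfold α at h; omega
  · rw [y_e4 t] at h; simp at h; unfold α at h; omega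

lemma yv2 {k j : ℕ} (hk : 1 ≤ k) (hj : 1 ≤ j) (h : y k 2 = α j) :
    (k = 2 ∧ j = 1) ∨ (k = j ∧ 5 ≤ k) ∨ (k = j+1 ∧ 6 ≤ k) ∨ (k = j+3 ∧ 4 ≤ k) := by
  rcases y_shape k hk with rfl | rfl | ⟨t,ht,rfl⟩ | ⟨t,ht,rfl⟩ | ⟨t,rfl⟩ | ⟨t,rfl⟩
  · rw [y_one] at h; simp at h; unfold α at h; omega
  · rw [y_two] at h; simp at h; unfold α at h; omega
  · rw [y_e1 t ht] at h; simp at h; unfold α at h; omega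
  · rw [y_e2 t ht] at h; simp at h; unfold α at h; omega
  · rw [y_e3 t] at h; simp at h; unfold α at h; omega
  · rw [y_e4 t] at h; simp at h; unfold α at h; omega

lemma yv3 {k j : ℕ} (hk : 1 ≤ k) (hj : 1 ≤ j) (h : y k 3 = α j) :
    (k = 2 ∧ j = 2) ∨ (k+1 = j ∧ 5 ≤ k) ∨ (k = j ∧ 6 ≤ k) ∨ (k = j+1 ∧ 3 ≤ k) := by
  rcases y_shape k hk with rfl | rfl | ⟨t,ht,rfl⟩ | ⟨t,ht,rfl⟩ | ⟨t,rfl⟩ | ⟨t,rfl⟩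
  · rw [y_one] at h; simp at h; unfold α at h; omega
  · rw [y_two] at h; simp at h; unfold α at h; omega
  · rw [y_e1 t ht] at h; simp at h; unfold α at h; omega
  · rw [y_e2 t ht] at h; simp at h; unfold α at h; omega
  · rw [y_e3 t] at h; simp at h; unfold α at h; omega
  · rw [y_e4 t] at h; simp at h; unfold α at h; omega

end vecsimp

/-! ### reduction of relation sums to small explicit sums -/

lemma sum_ite_reduce (s t : Finset (Fin 4 → ℕ)) (C : (Fin 4 → ℕ) → ℂ) (i : Fin 4) (a : ℕ)
    (ht : ∀ q ∈ t, q i = a) (hcomp : ∀ q ∈ s, q i = a → q ∈ t)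
    (hC : ∀ q ∈ t, q ∉ s → C q = 0) :
    ∑ q ∈ s, C q * (if q i = a then 1 else 0) = ∑ q ∈ t, C q := by
  classical
  rw [← Finset.sum_filter_add_sum_filter_not s (fun q => q i = a)]
  have h2 : ∑ q ∈ s.filter (fun q => ¬ q i = a), C q * (if q i = a then 1 else 0) = 0 := by
    apply Finset.sum_eq_zero
    intro q hq
    rw [Finset.mem_filter] at hq
    simp [hq.2]
  rw [h2, add_zero]
  have h1 : ∑ q ∈ s.filter (fun q => q i = a), C q * (if q i = a then 1 else 0)
      = ∑ q ∈ s.filter (fun q => q i = a), C q := by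
    apply Finset.sum_congr rfl
    intro q hq
    rw [Finset.mem_filter] at hq
    simp [hq.2]
  rw [h1]
  apply Finset.sum_subset
  · intro q hq
    rw [Finset.mem_filter] at hq
    exact hcomp q hq.1 hq.2
  · intro q hq hq'
    apply hC q hq
    intro hqs
    exact hq' (Finset.mem_filter.2 ⟨hqs, ht q hq⟩)

section rels
variable {n : ℕ} {C : (Fin 4 → ℕ) → ℂ} {p : Fin 4 → ℕ}

lemma rel_pair
    (hrel : ∀ (i : Fin 4) (a : ℕ),
      (if p i = a then (1:ℂ) else 0) = ∑ q ∈ WF n, C q * (if q i = a then 1 else 0))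
    (hC : ∀ q, q ∉ WF n → C q = 0)
    (i : Fin 4) (a : ℕ) (q1 q2 : Fin 4 → ℕ)
    (h1 : q1 i = a) (h2 : q2 i = a)
    (hcomp : ∀ q ∈ WF n, q i = a → q = q1 ∨ q = q2)
    (d12 : q1 ≠ q2) :
    (if p i = a then (1:ℂ) else 0) = C q1 + C q2 := by
  classical
  rw [hrel i a, sum_ite_reduce (WF n) {q1, q2} C i a ?_ ?_ ?_]
  · rw [Finset.sum_pair d12]
  · intro q hq; rcases Finset.mem_insert.1 hq with rfl | hq
    · exact h1
    · rw [Finset.mem_singleton.1 hq]; exact h2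
  · intro q hq hqa; rcases hcomp q hq hqa with rfl | rfl <;> simp
  · intro q _ hq; exact hC q hq

lemma rel_triple
    (hrel : ∀ (i : Fin 4) (a : ℕ),
      (if p i = a then (1:ℂ) else 0) = ∑ q ∈ WF n, C q * (if q i = a then 1 else 0))
    (hC : ∀ q, q ∉ WF n → C q = 0)
    (i : Fin 4) (a : ℕ) (q1 q2 q3 : Fin 4 → ℕ)
    (h1 : q1 i = a) (h2 : q2 i = a) (h3 : q3 i = a)
    (hcomp : ∀ q ∈ WF n, q i = a → q = q1 ∨ q = q2 ∨ q = q3)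
    (d12 : q1 ≠ q2) (d13 : q1 ≠ q3) (d23 : q2 ≠ q3) :
    (if p i = a then (1:ℂ) else 0) = C q1 + C q2 + C q3 := by
  classical
  rw [hrel i a, sum_ite_reduce (WF n) {q1, q2, q3} C i a ?_ ?_ ?_]
  · rw [Finset.sum_insert (by simp [d12, d13]), Finset.sum_pair d23]; ring
  · intro q hq
    rcases Finset.mem_insert.1 hq with rfl | hq
    · exact h1
    · rcases Finset.mem_insert.1 hq with rfl | hq
      · exact h2
      · rw [Finset.mem_singleton.1 hq]; exact h3
  · intro q hq hqa; rcases hcomp q hq hqa with rfl | rfl | rfl <;> simp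
  · intro q _ hq; exact hC q hq

lemma rel_quad
    (hrel : ∀ (i : Fin 4) (a : ℕ),
      (if p i = a then (1:ℂ) else 0) = ∑ q ∈ WF n, C q * (if q i = a then 1 else 0))
    (hC : ∀ q, q ∉ WF n → C q = 0)
    (i : Fin 4) (a : ℕ) (q1 q2 q3 q4 : Fin 4 → ℕ)
    (h1 : q1 i = a) (h2 : q2 i = a) (h3 : q3 i = a) (h4 : q4 i = a)
    (hcomp : ∀ q ∈ WF n, q i = a → q = q1 ∨ q = q2 ∨ q = q3 ∨ q = q4)
    (d12 : q1 ≠ q2) (d13 : q1 ≠ q3) (d14 : q1 ≠ q4)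
    (d23 : q2 ≠ q3) (d24 : q2 ≠ q4) (d34 : q3 ≠ q4) :
    (if p i = a then (1:ℂ) else 0) = C q1 + C q2 + C q3 + C q4 := by
  classical
  rw [hrel i a, sum_ite_reduce (WF n) {q1, q2, q3, q4} C i a ?_ ?_ ?_]
  · rw [Finset.sum_insert (by simp [d12, d13, d14]),
      Finset.sum_insert (by simp [d23, d24]), Finset.sum_pair d34]; ring
  · intro q hq
    rcases Finset.mem_insert.1 hq with rfl | hq
    · exact h1
    · rcases Finset.mem_insert.1 hq with rfl | hq
      · exact h2
      · rcases Finset.mem_insert.1 hq with rfl | hq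
        · exact h3
        · rw [Finset.mem_singleton.1 hq]; exact h4
  · intro q hq hqa; rcases hcomp q hq hqa with rfl | rfl | rfl | rfl <;> simp
  · intro q _ hq; exact hC q hq

end rels

lemma ne_of_coord {p q : Fin 4 → ℕ} (i : Fin 4) (h : p i ≠ q i) : p ≠ q :=
  fun he => h (congrFun he i)

lemma z_e' (n1 : ℕ) : z (n1+1) = ![α (4*n1+3), 1, α (4*n1+1), 3] := by
  rw [z_e]
  have e1 : 4*(n1+1)-1 = 4*n1+3 := by omega
  have e2 : 4*(n1+1)-3 = 4*n1+1 := by omega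
  rw [e1, e2]

lemma mem_WF {n : ℕ} {q : Fin 4 → ℕ} (hq : q ∈ WF n) :
    (∃ k, 1 ≤ k ∧ k ≤ 4*n ∧ q = y k) ∨ q = z n := by
  rcases Finset.mem_union.1 hq with h | h
  · obtain ⟨k, hk, rfl⟩ := Finset.mem_image.1 h
    rw [Finset.mem_Icc] at hk
    exact Or.inl ⟨k, hk.1, hk.2, rfl⟩
  · exact Or.inr (Finset.mem_singleton.1 h)

section nes
attribute [local simp] Matrix.cons_val_zero Matrix.cons_val_one Matrix.head_cons
  Matrix.cons_val_two Matrix.tail_cons Matrix.cons_val_three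

lemma ne34 (w : ℕ) : y (4*w+3) ≠ y (4*w+4) := by
  apply ne_of_coord 2; rw [y_e3 w, y_e4 w]; simp; unfold α; omega
lemma ne36 (w : ℕ) : y (4*w+3) ≠ y (4*w+6) := by
  apply ne_of_coord 2
  have h6 : 4*w+6 = 4*(w+1)+2 := by ring
  rw [y_e3 w, h6, y_e2 (w+1) (by omega)]; simp; unfold α; omega
lemma ne46 (w : ℕ) : y (4*w+4) ≠ y (4*w+6) := by
  apply ne_of_coord 1
  have h6 : 4*w+6 = 4*(w+1)+2 := by ring
  rw [y_e4 w, h6, y_e2 (w+1) (by omega)]; simp; unfold α; omega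
lemma ne35 (w : ℕ) : y (4*w+3) ≠ y (4*w+5) := by
  apply ne_of_coord 0
  have h5 : 4*w+5 = 4*(w+1)+1 := by ring
  rw [y_e3 w, h5, y_e1 (w+1) (by omega)]; simp; unfold α; omega
lemma ne45 (w : ℕ) : y (4*w+4) ≠ y (4*w+5) := by
  apply ne_of_coord 0
  have h5 : 4*w+5 = 4*(w+1)+1 := by ring
  rw [y_e4 w, h5, y_e1 (w+1) (by omega)]; simp; unfold α; omega
lemma ne12' (t : ℕ) (ht : 1 ≤ t) : y (4*t+1) ≠ y (4*t+2) := by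
  apply ne_of_coord 0; rw [y_e1 t ht, y_e2 t ht]; simp; unfold α; omega
lemma ne13' (t : ℕ) (ht : 1 ≤ t) : y (4*t+1) ≠ y (4*t+3) := by
  apply ne_of_coord 0; rw [y_e1 t ht, y_e3 t]; simp; unfold α; omega
lemma ne23' (t : ℕ) (ht : 1 ≤ t) : y (4*t+2) ≠ y (4*t+3) := by
  apply ne_of_coord 0; rw [y_e2 t ht, y_e3 t]; simp; unfold α; omega
lemma ne14' (t : ℕ) (ht : 1 ≤ t) : y (4*t+1) ≠ y (4*t+4) := by
  apply ne_of_coord 0; rw [y_e1 t ht, y_e4 t]; simp; unfold α; omega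
lemma ne24' (t : ℕ) (ht : 1 ≤ t) : y (4*t+2) ≠ y (4*t+4) := by
  apply ne_of_coord 0; rw [y_e2 t ht, y_e4 t]; simp; unfold α; omega
lemma ne3z (n1 : ℕ) : y (4*n1+3) ≠ z (n1+1) := by
  apply ne_of_coord 2; rw [y_e3 n1, z_e' n1]; simp; unfold α; omega
lemma ne4z (n1 : ℕ) : y (4*n1+4) ≠ z (n1+1) := by
  apply ne_of_coord 1; rw [y_e4 n1, z_e' n1]; simp; unfold α; omega
lemma ne1z (n1 : ℕ) (h : 1 ≤ n1) : y (4*n1+1) ≠ z (n1+1) := by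
  apply ne_of_coord 1; rw [y_e1 n1 h, z_e' n1]; simp; unfold α; omega
lemma ne2z (n1 : ℕ) (h : 1 ≤ n1) : y (4*n1+2) ≠ z (n1+1) := by
  apply ne_of_coord 0; rw [y_e2 n1 h, z_e' n1]; simp; unfold α; omega
lemma ney2z (n1 : ℕ) : y 2 ≠ z (n1+1) := by
  apply ne_of_coord 0; rw [y_two, z_e' n1]; simp; unfold α; omega
lemma y_three : y 3 = ![α 3, α 4, 2, α 2] := by
  have h := y_e3 0; norm_num at h; exact h
lemma y_four : y 4 = ![α 3, α 4, α 1, 3] := by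
  have h := y_e4 0; norm_num at h; exact h
lemma ne23 : y 2 ≠ y 3 := by
  apply ne_of_coord 0; rw [y_two, y_three]; simp; unfold α; omega
lemma ne24 : y 2 ≠ y 4 := by
  apply ne_of_coord 0; rw [y_two, y_four]; simp; unfold α; omega
end nes

section vecsimp2
attribute [local simp] Matrix.cons_val_zero Matrix.cons_val_one Matrix.head_cons
  Matrix.cons_val_two Matrix.tail_cons Matrix.cons_val_three

lemma z_mem (n1 : ℕ) {K : Set (Fin 4 → ℕ)} (hKW : K ⊆ ↑(WF (n1+1))) (hfull : IsFull K)
    (h1 : y 1 ∈ K) (h4 : y (4*n1+4) ∈ K) : z (n1+1) ∈ K := by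
  classical
  by_contra hzK
  have hproj : ∀ i, z (n1+1) i ∈ proj K i := by
    intro i
    fin_cases i
    · exact ⟨y (4*n1+4), h4, by rw [y_e4 n1, z_e' n1]; simp⟩
    · exact ⟨y 1, h1, by rw [y_one, z_e' n1]; simp⟩
    · exact ⟨y (4*n1+4), h4, by rw [y_e4 n1, z_e' n1]; simp⟩
    · exact ⟨y 1, h1, by rw [y_one, z_e' n1]; simp⟩
  obtain ⟨C, hC0, hrel⟩ := full_relation hKW hfull (z (n1+1)) hproj hzK
  have hCW : ∀ q, q ∉ WF (n1+1) → C q = 0 := by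
    intro q hq
    exact hC0 q (fun hk => hq (hKW hk))
  -- equation at (1, α (4*n1+4)) : 0 = C y(4n1+3) + C y(4n1+4)
  have E1 : (0:ℂ) = C (y (4*n1+3)) + C (y (4*n1+4)) := by
    have h := rel_pair hrel hCW 1 (α (4*n1+4)) (y (4*n1+3)) (y (4*n1+4))
      (by rw [y_e3 n1]; simp)
      (by rw [y_e4 n1]; simp)
      ?_ (ne34 n1)
    · rwa [if_neg (by rw [z_e' n1]; simp; unfold α; omega)] at h
    · intro q hq hqa
      rcases mem_WF hq with ⟨k, hk1, hk2, rfl⟩ | rfl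
      · rcases yv1 hk1 (by omega) hqa with ⟨hk, _⟩ | ⟨hk, _⟩ | ⟨hk, _⟩
        · omega
        · left; rw [show k = 4*n1+3 by omega]
        · right; rw [show k = 4*n1+4 by omega]
      · exfalso
        rw [z_e' n1] at hqa; simp at hqa; unfold α at hqa; omega
  -- equation at (0, α (4*n1+3)) : 1 = C y(4n1+3) + C y(4n1+4) + C z
  have E2 : (1:ℂ) = C (y (4*n1+3)) + C (y (4*n1+4)) + C (z (n1+1)) := by
    have h := rel_triple hrel hCW 0 (α (4*n1+3)) (y (4*n1+3)) (y (4*n1+4)) (z (n1+1))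
      (by rw [y_e3 n1]; simp)
      (by rw [y_e4 n1]; simp)
      (by rw [z_e' n1]; simp)
      ?_ (ne34 n1) (ne3z n1) (ne4z n1)
    · rwa [if_pos (by rw [z_e' n1]; simp)] at h
    · intro q hq hqa
      rcases mem_WF hq with ⟨k, hk1, hk2, rfl⟩ | rfl
      · rcases yv0 hk1 (by omega) hqa with ⟨hk, _⟩ | ⟨hk, _⟩ | ⟨hk, _⟩
        · left; rw [show k = 4*n1+3 by omega]
        · right; left; rw [show k = 4*n1+4 by omega]
        · omega
      · right; right; rfl
  have hz0 : C (z (n1+1)) = 0 := hC0 _ hzK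
  rw [hz0, add_zero, ← E1] at E2
  exact one_ne_zero E2
end vecsimp2

section vecsimp3
attribute [local simp] Matrix.cons_val_zero Matrix.cons_val_one Matrix.head_cons
  Matrix.cons_val_two Matrix.tail_cons Matrix.cons_val_three

lemma pstar_not_mem (n1 : ℕ) : ![0, 1, α (4*n1+1), 3] ∉ WF (n1+1) := by
  intro hp
  rcases mem_WF hp with ⟨k, hk1, _, hke⟩ | hze
  · rcases y_shape k hk1 with rfl | rfl | ⟨t,ht,rfl⟩ | ⟨t,ht,rfl⟩ | ⟨t,rfl⟩ | ⟨t,rfl⟩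
    · have h := congrFun hke 2; rw [y_one] at h; simp at h; unfold α at h; omega
    · have h := congrFun hke 3; rw [y_two] at h; simp at h; unfold α at h; omega
    · have h := congrFun hke 1; rw [y_e1 t ht] at h; simp at h; unfold α at h; omega
    · have h := congrFun hke 0; rw [y_e2 t ht] at h; simp at h; unfold α at h; omega
    · have h := congrFun hke 0; rw [y_e3 t] at h; simp at h; unfold α at h; omega
    · have h := congrFun hke 0; rw [y_e4 t] at h; simp at h; unfold α at h; omega
  · have h := congrFun hze 0; rw [z_e' n1] at h; simp at h; unfold α at h; omega

lemma main_chase (n1 : ℕ) {K : Set (Fin 4 → ℕ)} (hKW : K ⊆ ↑(WF (n1+1))) (hfull : IsFull K)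
    (h1 : y 1 ∈ K) (h4 : y (4*n1+4) ∈ K) :
    ∀ k, 2 ≤ k → k ≤ 4*n1+4 → y k ∈ K := by
  classical
  set p : Fin 4 → ℕ := ![0, 1, α (4*n1+1), 3] with hp
  have hpK : p ∉ K := fun hk => pstar_not_mem n1 (hKW hk)
  have hproj : ∀ i, p i ∈ proj K i := by
    intro i
    fin_cases i
    · exact ⟨y 1, h1, by rw [y_one]; simp [hp]⟩
    · exact ⟨y 1, h1, by rw [y_one]; simp [hp]⟩
    · exact ⟨y (4*n1+4), h4, by rw [y_e4 n1]; simp [hp]⟩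
    · exact ⟨y 1, h1, by rw [y_one]; simp [hp]⟩
  obtain ⟨C, hC0, hrel⟩ := full_relation hKW hfull p hproj hpK
  have hCW : ∀ q, q ∉ WF (n1+1) → C q = 0 := fun q hq => hC0 q (fun hk => hq (hKW hk))
  have hmem : ∀ q, C q ≠ 0 → q ∈ K := by
    intro q hq; by_contra h; exact hq (hC0 q h)
  -- E_top1 : at (1, α (4*n1+4))
  have Etop1 : C (y (4*n1+3)) + C (y (4*n1+4)) = 0 := by
    have h := rel_pair hrel hCW 1 (α (4*n1+4)) (y (4*n1+3)) (y (4*n1+4))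
      (by rw [y_e3 n1]; simp)
      (by rw [y_e4 n1]; simp)
      ?_ (ne34 n1)
    · rw [if_neg (by simp [hp]; unfold α; omega)] at h; exact h.symm
    · intro q hq hqa
      rcases mem_WF hq with ⟨k, hk1, hk2, rfl⟩ | rfl
      · rcases yv1 hk1 (by omega) hqa with ⟨hk, _⟩ | ⟨hk, _⟩ | ⟨hk, _⟩
        · omega
        · left; rw [show k = 4*n1+3 by omega]
        · right; rw [show k = 4*n1+4 by omega]
      · exfalso; rw [z_e' n1] at hqa; simp at hqa; unfold α at hqa; omega
  -- E_top0 : at (0, α (4*n1+3))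
  have Etop0 : C (y (4*n1+3)) + C (y (4*n1+4)) + C (z (n1+1)) = 0 := by
    have h := rel_triple hrel hCW 0 (α (4*n1+3)) (y (4*n1+3)) (y (4*n1+4)) (z (n1+1))
      (by rw [y_e3 n1]; simp)
      (by rw [y_e4 n1]; simp)
      (by rw [z_e' n1]; simp)
      ?_ (ne34 n1) (ne3z n1) (ne4z n1)
    · rw [if_neg (by simp [hp]; unfold α; omega)] at h; exact h.symm
    · intro q hq hqa
      rcases mem_WF hq with ⟨k, hk1, hk2, rfl⟩ | rfl
      · rcases yv0 hk1 (by omega) hqa with ⟨hk, _⟩ | ⟨hk, _⟩ | ⟨hk, _⟩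
        · left; rw [show k = 4*n1+3 by omega]
        · right; left; rw [show k = 4*n1+4 by omega]
        · omega
      · right; right; rfl
  have hz0 : C (z (n1+1)) = 0 := by linear_combination Etop0 - Etop1
  -- E_92 : at (3, α 2)
  have E92 : C (y 2) + C (y 3) = 0 := by
    have h := rel_pair hrel hCW 3 (α 2) (y 2) (y 3)
      (by rw [y_two]; simp)
      (by rw [y_three]; simp)
      ?_ ne23
    · rw [if_neg (by simp [hp]; unfold α; omega)] at h; exact h.symm
    · intro q hq hqa
      rcases mem_WF hq with ⟨k, hk1, hk2, rfl⟩ | rfl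
      · rcases yv3 hk1 (by omega) hqa with ⟨hk, _⟩ | ⟨hk, _⟩ | ⟨hk, _⟩ | ⟨hk, _⟩
        · left; rw [hk]
        · omega
        · omega
        · right; rw [show k = 3 by omega]
      · exfalso; rw [z_e' n1] at hqa; simp at hqa; unfold α at hqa; omega
  -- case split
  rcases Nat.eq_zero_or_pos n1 with rfl | hn1
  · -- n = 1 : forcing y2 y3 y4
    norm_num at Etop1 Etop0 hz0
    have E4 : C (y 2) + C (y 4) + C (z 1) = 1 := by
      have h := rel_triple hrel hCW 2 (α 1) (y 2) (y 4) (z 1)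
        (by rw [y_two]; simp)
        (by rw [y_four]; simp)
        (by rw [show (1:ℕ) = 0+1 from rfl, z_e' 0]; simp)
        ?_ ne24 (by have h := ney2z 0; norm_num at h; exact h)
        (by have h := ne4z 0; norm_num at h; exact h)
      · rw [if_pos (by simp [hp])] at h; exact h.symm
      · intro q hq hqa
        rcases mem_WF hq with ⟨k, hk1, hk2, rfl⟩ | rfl
        · rcases yv2 hk1 (by omega) hqa with ⟨hk, _⟩ | ⟨hk, _⟩ | ⟨hk, _⟩ | ⟨hk, _⟩
          · left; rw [hk]
          · omega
          · omega
          · right; left; rw [show k = 4 by omega]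
        · right; right; rfl
    have hc4 : C (y 4) = 1/2 := by linear_combination (E4 - E92 + Etop1 - hz0)/2
    have hc3 : C (y 3) = -(1/2) := by linear_combination Etop1 - hc4
    have hc2 : C (y 2) = 1/2 := by linear_combination E92 - hc3
    intro k hk2 hk4
    interval_cases k
    · exact hmem _ (by rw [hc2]; norm_num)
    · exact hmem _ (by rw [hc3]; norm_num)
    · exact hmem _ (by rw [hc4]; norm_num)
  · -- general case n1 ≥ 1
    -- E_c : at (3, α (4*t+2)), t ≥ 1
    have Ec : ∀ t, 1 ≤ t → C (y (4*t+1)) + C (y (4*t+2)) + C (y (4*t+3)) = 0 := by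
      intro t ht
      have h := rel_triple hrel hCW 3 (α (4*t+2)) (y (4*t+1)) (y (4*t+2)) (y (4*t+3))
        (by rw [y_e1 t ht]; simp)
        (by rw [y_e2 t ht]; simp)
        (by rw [y_e3 t]; simp)
        ?_ (ne12' t ht) (ne13' t ht) (ne23' t ht)
      · rw [if_neg (by simp [hp]; unfold α; omega)] at h; exact h.symm
      · intro q hq hqa
        rcases mem_WF hq with ⟨k, hk1, hk2, rfl⟩ | rfl
        · rcases yv3 hk1 (by omega) hqa with ⟨hk, hj⟩ | ⟨hk, _⟩ | ⟨hk, _⟩ | ⟨hk, _⟩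
          · omega
          · left; rw [show k = 4*t+1 by omega]
          · right; left; rw [show k = 4*t+2 by omega]
          · right; right; rw [show k = 4*t+3 by omega]
        · exfalso; rw [z_e' n1] at hqa; simp at hqa; unfold α at hqa; omega
    -- E_a : at (0, α (4*w+3)), w ≤ n1-1
    have Ea : ∀ w, w ≤ n1 - 1 → C (y (4*w+3)) + C (y (4*w+4)) + C (y (4*w+6)) = 0 := by
      intro w hw
      have h := rel_triple hrel hCW 0 (α (4*w+3)) (y (4*w+3)) (y (4*w+4)) (y (4*w+6))
        (by rw [y_e3 w]; simp)
        (by rw [y_e4 w]; simp)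
        (by rw [show 4*w+6 = 4*(w+1)+2 from by ring, y_e2 (w+1) (by omega)]; simp; unfold α; omega)
        ?_ (ne34 w) (ne36 w) (ne46 w)
      · rw [if_neg (by simp [hp]; unfold α; omega)] at h; exact h.symm
      · intro q hq hqa
        rcases mem_WF hq with ⟨k, hk1, hk2, rfl⟩ | rfl
        · rcases yv0 hk1 (by omega) hqa with ⟨hk, _⟩ | ⟨hk, _⟩ | ⟨hk, _⟩
          · left; rw [show k = 4*w+3 by omega]
          · right; left; rw [show k = 4*w+4 by omega]
          · right; right; rw [show k = 4*w+6 by omega]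
        · exfalso; rw [z_e' n1] at hqa; simp at hqa; unfold α at hqa; omega
    -- E_b : at (1, α (4*w+4))
    have Eb : ∀ w : ℕ, C (y (4*w+3)) + C (y (4*w+4)) + C (y (4*w+5)) = 0 := by
      intro w
      have h := rel_triple hrel hCW 1 (α (4*w+4)) (y (4*w+3)) (y (4*w+4)) (y (4*w+5))
        (by rw [y_e3 w]; simp)
        (by rw [y_e4 w]; simp)
        (by rw [show 4*w+5 = 4*(w+1)+1 from by ring, y_e1 (w+1) (by omega)]; simp; unfold α; omega)
        ?_ (ne34 w) (ne35 w) (ne45 w)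
      · rw [if_neg (by simp [hp]; unfold α; omega)] at h; exact h.symm
      · intro q hq hqa
        rcases mem_WF hq with ⟨k, hk1, hk2, rfl⟩ | rfl
        · rcases yv1 hk1 (by omega) hqa with ⟨hk, _⟩ | ⟨hk, _⟩ | ⟨hk, _⟩
          · right; right; rw [show k = 4*w+5 by omega]
          · left; rw [show k = 4*w+3 by omega]
          · right; left; rw [show k = 4*w+4 by omega]
        · exfalso; rw [z_e' n1] at hqa; simp at hqa; unfold α at hqa; omega
    -- E_d : at (2, α (4*t+1)), 1 ≤ t ≤ n1-1
    have Ed : ∀ t, 1 ≤ t → t ≤ n1 - 1 → C (y (4*t+1)) + C (y (4*t+2)) + C (y (4*t+4)) = 0 := by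
      intro t ht ht'
      have h := rel_triple hrel hCW 2 (α (4*t+1)) (y (4*t+1)) (y (4*t+2)) (y (4*t+4))
        (by rw [y_e1 t ht]; simp)
        (by rw [y_e2 t ht]; simp)
        (by rw [y_e4 t]; simp)
        ?_ (ne12' t ht) (ne14' t ht) (ne24' t ht)
      · rw [if_neg (by simp [hp]; unfold α; omega)] at h; exact h.symm
      · intro q hq hqa
        rcases mem_WF hq with ⟨k, hk1, hk2, rfl⟩ | rfl
        · rcases yv2 hk1 (by omega) hqa with ⟨hk, hj⟩ | ⟨hk, _⟩ | ⟨hk, _⟩ | ⟨hk, _⟩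
          · omega
          · left; rw [show k = 4*t+1 by omega]
          · right; left; rw [show k = 4*t+2 by omega]
          · right; right; rw [show k = 4*t+4 by omega]
        · exfalso; rw [z_e' n1] at hqa; simp at hqa; unfold α at hqa; omega
    -- E_91 : at (2, α 1)
    have E91 : C (y 2) + C (y 4) = 0 := by
      have h := rel_pair hrel hCW 2 (α 1) (y 2) (y 4)
        (by rw [y_two]; simp)
        (by rw [y_four]; simp)
        ?_ ne24
      · rw [if_neg (by simp [hp]; unfold α; omega)] at h; exact h.symm
      · intro q hq hqa
        rcases mem_WF hq with ⟨k, hk1, hk2, rfl⟩ | rfl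
        · rcases yv2 hk1 (by omega) hqa with ⟨hk, _⟩ | ⟨hk, hj⟩ | ⟨hk, hj⟩ | ⟨hk, _⟩
          · left; rw [hk]
          · omega
          · omega
          · right; rw [show k = 4 by omega]
        · exfalso; rw [z_e' n1] at hqa; simp at hqa; unfold α at hqa; omega
    -- E_top2 : at (2, α (4*n1+1))
    have Etop2 : C (y (4*n1+1)) + C (y (4*n1+2)) + C (y (4*n1+4)) + C (z (n1+1)) = 1 := by
      have h := rel_quad hrel hCW 2 (α (4*n1+1)) (y (4*n1+1)) (y (4*n1+2)) (y (4*n1+4)) (z (n1+1))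
        (by rw [y_e1 n1 hn1]; simp)
        (by rw [y_e2 n1 hn1]; simp)
        (by rw [y_e4 n1]; simp)
        (by rw [z_e' n1]; simp)
        ?_ (ne12' n1 hn1) (ne14' n1 hn1) (ne1z n1 hn1) (ne24' n1 hn1) (ne2z n1 hn1) (ne4z n1)
      · rw [if_pos (by simp [hp])] at h; exact h.symm
      · intro q hq hqa
        rcases mem_WF hq with ⟨k, hk1, hk2, rfl⟩ | rfl
        · rcases yv2 hk1 (by omega) hqa with ⟨hk, hj⟩ | ⟨hk, _⟩ | ⟨hk, _⟩ | ⟨hk, _⟩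
          · omega
          · left; rw [show k = 4*n1+1 by omega]
          · right; left; rw [show k = 4*n1+2 by omega]
          · right; right; left; rw [show k = 4*n1+4 by omega]
        · right; right; right; rfl
    -- values at the top block
    have hc44 : C (y (4*n1+4)) = 1/2 := by
      linear_combination (Etop2 - Ec n1 hn1 + Etop1 - hz0)/2
    have hc43 : C (y (4*n1+3)) = -(1/2) := by linear_combination Etop1 - hc44
    -- the chain quantity
    set T : ℕ → ℂ := fun w => C (y (4*w+3)) + C (y (4*w+4)) with hT
    have hstep : ∀ w, w ≤ n1 - 1 →
        C (y (4*w+5)) = -T w ∧ C (y (4*w+6)) = -T w ∧ C (y (4*w+7)) = 2 * T w := by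
      intro w hw
      have hb := Eb w
      have ha := Ea w hw
      have hc := Ec (w+1) (by omega)
      rw [show 4*(w+1)+1 = 4*w+5 from by ring, show 4*(w+1)+2 = 4*w+6 from by ring,
        show 4*(w+1)+3 = 4*w+7 from by ring] at hc
      refine ⟨by linear_combination hb, by linear_combination ha, ?_⟩
      have h5 : C (y (4*w+5)) = -T w := by linear_combination hb
      have h6 : C (y (4*w+6)) = -T w := by linear_combination ha
      linear_combination hc - h5 - h6
    have hstep2 : ∀ w, w + 2 ≤ n1 → C (y (4*w+8)) = 2 * T w := by
      intro w hw
      have hb1 : 1 ≤ w+1 := by omega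
      have hb2 : w+1 ≤ n1-1 := by omega
      have hd := Ed (w+1) hb1 hb2
      rw [show 4*(w+1)+1 = 4*w+5 from by ring, show 4*(w+1)+2 = 4*w+6 from by ring,
        show 4*(w+1)+4 = 4*w+8 from by ring] at hd
      obtain ⟨h5, h6, _⟩ := hstep w (by omega)
      linear_combination hd - h5 - h6
    have hrec : ∀ w, w + 2 ≤ n1 → T (w+1) = 4 * T w := by
      intro w hw
      have h7 := (hstep w (by omega)).2.2
      have h8 := hstep2 w hw
      have hTu : ∀ u, T u = C (y (4*u+3)) + C (y (4*u+4)) := fun u => rfl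
      have : T (w+1) = C (y (4*w+7)) + C (y (4*w+8)) := by
        rw [hTu (w+1), show 4*(w+1)+3 = 4*w+7 from by ring,
          show 4*(w+1)+4 = 4*w+8 from by ring]
      rw [this, h7, h8]; ring
    have htopT : T (n1-1) = -(1/4) := by
      have h7 := (hstep (n1-1) le_rfl).2.2
      rw [show 4*(n1-1)+7 = 4*n1+3 from by omega] at h7
      rw [hc43] at h7
      linear_combination -h7/2
    have hTnz : ∀ d w, w + d = n1 - 1 → T w ≠ 0 := by
      intro d
      induction d with
      | zero => intro w hw; rw [show w = n1-1 by omega, htopT]; norm_num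
      | succ d ih =>
        intro w hw
        have h4T : T (w+1) = 4 * T w := hrec w (by omega)
        have hne := ih (w+1) (by omega)
        rw [h4T] at hne
        intro h0; rw [h0] at hne; simp at hne
    have hTnz' : ∀ w, w ≤ n1 - 1 → T w ≠ 0 := fun w hw => hTnz (n1-1-w) w (by omega)
    -- small indices
    have hT0 : T 0 = C (y 3) + C (y 4) := rfl
    have h34 : C (y 3) = C (y 4) := by linear_combination E92 - E91
    have hc3 : C (y 3) = T 0 / 2 := by linear_combination h34/2 - hT0/2 + hT0
    have hc4 : C (y 4) = T 0 / 2 := by linear_combination hc3 - h34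
    have hc2 : C (y 2) = -(T 0 / 2) := by linear_combination E92 - hc3
    have hT0nz : T 0 ≠ 0 := hTnz' 0 (by omega)
    -- final coverage
    intro k hk2 hk4
    rcases Nat.lt_or_ge k 5 with hk5 | hk5
    · interval_cases k
      · exact hmem _ (by rw [hc2]; simpa using hT0nz)
      · exact hmem _ (by rw [hc3]; simpa using hT0nz)
      · exact hmem _ (by rw [hc4]; simpa using hT0nz)
    · obtain ⟨w, hw⟩ : ∃ w, k = 4*w+5 ∨ k = 4*w+6 ∨ k = 4*w+7 ∨ k = 4*w+8 :=
        ⟨(k-5)/4, by omega⟩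
      rcases hw with rfl | rfl | rfl | rfl
      · have hwle : w ≤ n1 - 1 := by omega
        exact hmem _ (by rw [(hstep w hwle).1]; simpa using hTnz' w hwle)
      · have hwle : w ≤ n1 - 1 := by omega
        exact hmem _ (by rw [(hstep w hwle).2.1]; simpa using hTnz' w hwle)
      · have hwle : w ≤ n1 - 1 := by omega
        have := (hstep w hwle).2.2
        exact hmem _ (by rw [this]; simpa using hTnz' w hwle)
      · rcases Nat.lt_or_ge w (n1-1) with hw' | hw'
        · have h8 := hstep2 w (by omega)
          exact hmem _ (by rw [h8]; simpa using hTnz' w (by omega))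
        · have : 4*w+8 = 4*n1+4 := by omega
          rw [this]
          exact hmem _ (by rw [hc44]; norm_num)
end vecsimp3

lemma part1 : ∀ n : ℕ, 1 ≤ n → ∀ K ⊆ Sn (4 * n) ∪ {z n},
    IsFull K → y 1 ∈ K → y (4 * n) ∈ K → K = Sn (4 * n) ∪ {z n} := by
  intro n hn K hKsub hfull hy1 hy4
  obtain ⟨n1, rfl⟩ : ∃ n1, n = n1 + 1 := ⟨n - 1, by omega⟩
  rw [Sn_union_eq (n1+1)] at hKsub ⊢
  have hy4' : y (4*n1+4) ∈ K := by rwa [show 4*(n1+1) = 4*n1+4 from by ring] at hy4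
  have hz := z_mem n1 hKsub hfull hy1 hy4'
  have hky := main_chase n1 hKsub hfull hy1 hy4'
  apply Set.Subset.antisymm hKsub
  intro q hq
  rcases mem_WF (Finset.mem_coe.1 hq) with ⟨k, hk1, hk2, rfl⟩ | rfl
  · rcases Nat.lt_or_ge k 2 with h | h
    · rw [show k = 1 by omega]; exact hy1
    · exact hky k h (by omega)
  · exact hz

lemma y4k_injOn (n : ℕ) : Set.InjOn (fun k => y (4*k)) (Set.Icc 1 n) := by
  intro a ha b hb hab
  have ha1 : 1 ≤ a := ha.1
  have hb1 : 1 ≤ b := hb.1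
  simp only at hab
  have h := congrFun hab 1
  rw [show 4*a = 4*(a-1)+4 from by omega, y_e4 (a-1)] at h
  rw [show 4*b = 4*(b-1)+4 from by omega, y_e4 (b-1)] at h
  simp only [Matrix.cons_val_one, Matrix.head_cons, Matrix.cons_val_zero, Matrix.tail_cons] at h
  unfold α at h
  omega

lemma part2 : ∀ N : ℕ, ∃ n : ℕ, 1 ≤ n ∧ ∀ K ⊆ Sn (4 * n) ∪ {z n},
    IsFull K → y 1 ∈ K → y (4 * n) ∈ K → N ≤ K.ncard := by
  classical
  intro N
  refine ⟨N + 1, by omega, ?_⟩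
  intro K hKsub hfull hy1 hy4
  rw [part1 (N+1) (by omega) K hKsub hfull hy1 hy4]
  rw [Sn_union_eq (N+1), Set.ncard_coe_finset]
  have himg : (Finset.Icc 1 (N+1)).image (fun k => y (4*k)) ⊆ WF (N+1) := by
    intro q hq
    obtain ⟨k, hk, rfl⟩ := Finset.mem_image.1 hq
    rw [Finset.mem_Icc] at hk
    exact Finset.mem_union_left _ (Finset.mem_image.2 ⟨4*k, Finset.mem_Icc.2 ⟨by omega, by omega⟩, rfl⟩)
  have hcard : ((Finset.Icc 1 (N+1)).image (fun k => y (4*k))).card = N + 1 := by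
    rw [Finset.card_image_of_injOn ?_, Nat.card_Icc]
    · omega
    · intro a ha b hb hab
      exact y4k_injOn (N+1) (by simpa using Finset.mem_Icc.1 ha)
        (by simpa using Finset.mem_Icc.1 hb) hab
  have := Finset.card_le_card himg
  omega

end

/-- the geodesic between y₁ and y_{4n} in S_{4n} ∪ {zₙ} is the whole
set: the only full subset containing both is S_{4n} ∪ {zₙ} itself. In particular
the geodesic lengths in this family tend to infinity. -/
theorem stmt_15 :
    (∀ n : ℕ, 1 ≤ n → ∀ K ⊆ Sn (4 * n) ∪ {z n},
      IsFull K → y 1 ∈ K → y (4 * n) ∈ K → K = Sn (4 * n) ∪ {z n}) ∧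
    (∀ N : ℕ, ∃ n : ℕ, 1 ≤ n ∧ ∀ K ⊆ Sn (4 * n) ∪ {z n},
      IsFull K → y 1 ∈ K → y (4 * n) ∈ K → N ≤ K.ncard) :=
  ⟨part1, part2⟩
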